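/- Let c : ℝ → ℝ and let u : ℝ × ℝ → ℝ be three times continuously differentiable on {(x,t) : t > 0} and satisfy the wave equation ∂²u/∂t²(x,t) = c(x)² · ∂²u/∂x²(x,t) for all x and all t > 0. Define B : ℝ × (0,∞) → ℝ by B(x,T) = t · ∂u/∂t(x,t) − u(x,t) evaluated at t = 3 T^{1/3}. Then B satisfies ∂²B/∂T²(x,T) = T^{−4/3} · c(x)² · ∂²B/∂x²(x,T) for all x and all T > 0. -/

import Mathlib

open Filter Topology

/-- First partial derivative with respect to the first argument. -/
noncomputable def pdx (u : ℝ × ℝ → ℝ) : ℝ × ℝ → ℝ :=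
  fun p => deriv (fun x => u (x, p.2)) p.1

/-- First partial derivative with respect to the second argument. -/
noncomputable def pdt (u : ℝ × ℝ → ℝ) : ℝ × ℝ → ℝ :=
  fun p => deriv (fun t => u (p.1, t)) p.2

section Helpers

lemma hasDerivAt_slice_x' {F : Type*} [NormedAddCommGroup F] [NormedSpace ℝ F]
    {f : ℝ × ℝ → F} {p : ℝ × ℝ} (hf : DifferentiableAt ℝ f p) :
    HasDerivAt (fun x => f (x, p.2)) (fderiv ℝ f p (1, 0)) p.1 := by
  have h1 : HasDerivAt (fun x : ℝ => (x, p.2)) ((1 : ℝ), (0 : ℝ)) p.1 :=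
    (hasDerivAt_id p.1).prodMk (hasDerivAt_const _ _)
  have := hf.hasFDerivAt.comp_hasDerivAt p.1 (by simpa using h1)
  exact this

lemma hasDerivAt_slice_t' {F : Type*} [NormedAddCommGroup F] [NormedSpace ℝ F]
    {f : ℝ × ℝ → F} {p : ℝ × ℝ} (hf : DifferentiableAt ℝ f p) :
    HasDerivAt (fun t => f (p.1, t)) (fderiv ℝ f p (0, 1)) p.2 := by
  have h1 : HasDerivAt (fun t : ℝ => (p.1, t)) ((0 : ℝ), (1 : ℝ)) p.2 :=
    (hasDerivAt_const _ _).prodMk (hasDerivAt_id p.2)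
  have := hf.hasFDerivAt.comp_hasDerivAt p.2 (by simpa using h1)
  exact this

lemma pdx_eq {f : ℝ × ℝ → ℝ} {p : ℝ × ℝ} (hf : DifferentiableAt ℝ f p) :
    pdx f p = fderiv ℝ f p (1, 0) := (hasDerivAt_slice_x' hf).deriv

lemma pdt_eq {f : ℝ × ℝ → ℝ} {p : ℝ × ℝ} (hf : DifferentiableAt ℝ f p) :
    pdt f p = fderiv ℝ f p (0, 1) := (hasDerivAt_slice_t' hf).deriv

lemma hasDerivAt_pdx {f : ℝ × ℝ → ℝ} {p : ℝ × ℝ} (hf : DifferentiableAt ℝ f p) :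
    HasDerivAt (fun x => f (x, p.2)) (pdx f p) p.1 := by
  rw [pdx_eq hf]; exact hasDerivAt_slice_x' hf

lemma hasDerivAt_pdt {f : ℝ × ℝ → ℝ} {p : ℝ × ℝ} (hf : DifferentiableAt ℝ f p) :
    HasDerivAt (fun t => f (p.1, t)) (pdt f p) p.2 := by
  rw [pdt_eq hf]; exact hasDerivAt_slice_t' hf

lemma pdx_eventuallyEq {f : ℝ × ℝ → ℝ} {p : ℝ × ℝ} {n : ℕ}
    (hf : ContDiffAt ℝ (n + 1) f p) :
    pdx f =ᶠ[𝓝 p] fun q => fderiv ℝ f q (1, 0) := by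
  filter_upwards [hf.eventually (by simp)] with q hq
  exact pdx_eq (hq.differentiableAt
    (by simp))

lemma pdt_eventuallyEq {f : ℝ × ℝ → ℝ} {p : ℝ × ℝ} {n : ℕ}
    (hf : ContDiffAt ℝ (n + 1) f p) :
    pdt f =ᶠ[𝓝 p] fun q => fderiv ℝ f q (0, 1) := by
  filter_upwards [hf.eventually (by simp)] with q hq
  exact pdt_eq (hq.differentiableAt
    (by simp))

lemma pdx_contDiffAt {f : ℝ × ℝ → ℝ} {p : ℝ × ℝ} {n : ℕ}
    (hf : ContDiffAt ℝ (n + 1) f p) :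
    ContDiffAt ℝ n (pdx f) p := by
  have h1 : ContDiffAt ℝ n (fderiv ℝ f) p := hf.fderiv_right (by exact_mod_cast le_rfl)
  exact (h1.clm_apply contDiffAt_const).congr_of_eventuallyEq (pdx_eventuallyEq hf)

lemma pdt_contDiffAt {f : ℝ × ℝ → ℝ} {p : ℝ × ℝ} {n : ℕ}
    (hf : ContDiffAt ℝ (n + 1) f p) :
    ContDiffAt ℝ n (pdt f) p := by
  have h1 : ContDiffAt ℝ n (fderiv ℝ f) p := hf.fderiv_right (by exact_mod_cast le_rfl)
  exact (h1.clm_apply contDiffAt_const).congr_of_eventuallyEq (pdt_eventuallyEq hf)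

lemma tendsto_slice_t (p : ℝ × ℝ) :
    Filter.Tendsto (fun t : ℝ => (p.1, t)) (𝓝 p.2) (𝓝 p) :=
  Continuous.tendsto' (continuous_const.prodMk continuous_id) p.2 p (by simp)

lemma tendsto_slice_x (p : ℝ × ℝ) :
    Filter.Tendsto (fun x : ℝ => (x, p.2)) (𝓝 p.1) (𝓝 p) :=
  Continuous.tendsto' (continuous_id.prodMk continuous_const) p.1 p (by simp)

lemma clairaut {f : ℝ × ℝ → ℝ} {p : ℝ × ℝ} (hf : ContDiffAt ℝ 2 f p) :
    pdt (pdx f) p = pdx (pdt f) p := by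
  have hf' : ContDiffAt ℝ ((1 : ℕ) + 1) f p := by exact_mod_cast hf
  have hd : DifferentiableAt ℝ (fderiv ℝ f) p :=
    (hf'.fderiv_right (m := 1) (by exact_mod_cast le_rfl)).differentiableAt one_ne_zero
  have hsym := hf.isSymmSndFDerivAt (by simp)
  have hEx := pdx_eventuallyEq hf'
  have hEt := pdt_eventuallyEq hf'
  have h1 : pdt (pdx f) p = deriv (fun t => fderiv ℝ f (p.1, t) (1, 0)) p.2 :=
    Filter.EventuallyEq.deriv_eq (hEx.comp_tendsto (tendsto_slice_t p))
  have h2 : pdx (pdt f) p = deriv (fun x => fderiv ℝ f (x, p.2) (0, 1)) p.1 :=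
    Filter.EventuallyEq.deriv_eq (hEt.comp_tendsto (tendsto_slice_x p))
  have h3 : HasDerivAt (fun t => fderiv ℝ f (p.1, t) (1, 0))
      (fderiv ℝ (fderiv ℝ f) p (0, 1) (1, 0)) p.2 := by
    have h := hasDerivAt_slice_t' hd
    have := ((ContinuousLinearMap.apply ℝ ℝ ((1 : ℝ), (0 : ℝ))).hasFDerivAt).comp_hasDerivAt p.2 h
    exact this
  have h4 : HasDerivAt (fun x => fderiv ℝ f (x, p.2) (0, 1))
      (fderiv ℝ (fderiv ℝ f) p (1, 0) (0, 1)) p.1 := by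
    have h := hasDerivAt_slice_x' hd
    have := ((ContinuousLinearMap.apply ℝ ℝ ((0 : ℝ), (1 : ℝ))).hasFDerivAt).comp_hasDerivAt p.1 h
    exact this
  rw [h1, h2, h3.deriv, h4.deriv, hsym]

end Helpers

theorem stmt_10 (c : ℝ → ℝ) (u B : ℝ × ℝ → ℝ)
    (hu : ContDiffOn ℝ 3 u {p : ℝ × ℝ | 0 < p.2})
    (hwave : ∀ x t : ℝ, 0 < t →
      pdt (pdt u) (x, t) = (c x) ^ 2 * pdx (pdx u) (x, t))
    (hB : ∀ x T : ℝ, 0 < T →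
      B (x, T) = 3 * T ^ ((1 : ℝ) / 3) * pdt u (x, 3 * T ^ ((1 : ℝ) / 3))
          - u (x, 3 * T ^ ((1 : ℝ) / 3))) :
    ∀ x T : ℝ, 0 < T →
      pdt (pdt B) (x, T)
        = T ^ (-(4 : ℝ) / 3) * (c x) ^ 2 * pdx (pdx B) (x, T) := by
  have hΩ : IsOpen {p : ℝ × ℝ | 0 < p.2} := isOpen_lt continuous_const continuous_snd
  have cd3 : ∀ q : ℝ × ℝ, 0 < q.2 → ContDiffAt ℝ 3 u q :=
    fun q hq => hu.contDiffAt (hΩ.mem_nhds hq)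
  have cd3' : ∀ q : ℝ × ℝ, 0 < q.2 → ContDiffAt ℝ ((2 : ℕ) + 1) u q :=
    fun q hq => by exact_mod_cast cd3 q hq
  have cd2 : ∀ q : ℝ × ℝ, 0 < q.2 → ContDiffAt ℝ 2 u q :=
    fun q hq => (cd3 q hq).of_le (by norm_num)
  -- smoothness of derived functions
  have hu1 : ∀ q : ℝ × ℝ, 0 < q.2 → ContDiffAt ℝ 2 (pdt u) q := by
    intro q hq
    have := pdt_contDiffAt (n := 2) (cd3' q hq)
    exact_mod_cast this
  have hu1' : ∀ q : ℝ × ℝ, 0 < q.2 → ContDiffAt ℝ ((1 : ℕ) + 1) (pdt u) q :=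
    fun q hq => by exact_mod_cast hu1 q hq
  have hu2 : ∀ q : ℝ × ℝ, 0 < q.2 → ContDiffAt ℝ 1 (pdt (pdt u)) q := by
    intro q hq
    have := pdt_contDiffAt (n := 1) (hu1' q hq)
    exact_mod_cast this
  have hx1 : ∀ q : ℝ × ℝ, 0 < q.2 → ContDiffAt ℝ 2 (pdx u) q := by
    intro q hq
    have := pdx_contDiffAt (n := 2) (cd3' q hq)
    exact_mod_cast this
  have hx1' : ∀ q : ℝ × ℝ, 0 < q.2 → ContDiffAt ℝ ((1 : ℕ) + 1) (pdx u) q :=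
    fun q hq => by exact_mod_cast hx1 q hq
  have hxx : ∀ q : ℝ × ℝ, 0 < q.2 → ContDiffAt ℝ 1 (pdx (pdx u)) q := by
    intro q hq
    have := pdx_contDiffAt (n := 1) (hx1' q hq)
    exact_mod_cast this
  have hxt : ∀ q : ℝ × ℝ, 0 < q.2 → ContDiffAt ℝ 1 (pdx (pdt u)) q := by
    intro q hq
    have := pdx_contDiffAt (n := 1) (hu1' q hq)
    exact_mod_cast this
  -- differentiability facts
  have du : ∀ q : ℝ × ℝ, 0 < q.2 → DifferentiableAt ℝ u q :=
    fun q hq => (cd2 q hq).differentiableAt two_ne_zero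
  have du1 : ∀ q : ℝ × ℝ, 0 < q.2 → DifferentiableAt ℝ (pdt u) q :=
    fun q hq => (hu1 q hq).differentiableAt two_ne_zero
  have du2 : ∀ q : ℝ × ℝ, 0 < q.2 → DifferentiableAt ℝ (pdt (pdt u)) q :=
    fun q hq => (hu2 q hq).differentiableAt one_ne_zero
  have dxx : ∀ q : ℝ × ℝ, 0 < q.2 → DifferentiableAt ℝ (pdx (pdx u)) q :=
    fun q hq => (hxx q hq).differentiableAt one_ne_zero
  have dxt : ∀ q : ℝ × ℝ, 0 < q.2 → DifferentiableAt ℝ (pdx (pdt u)) q :=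
    fun q hq => (hxt q hq).differentiableAt one_ne_zero
  have dx1 : ∀ q : ℝ × ℝ, 0 < q.2 → DifferentiableAt ℝ (pdx u) q :=
    fun q hq => (hx1 q hq).differentiableAt two_ne_zero
  -- derivative of the time change
  have hφ : ∀ τ : ℝ, 0 < τ →
      HasDerivAt (fun t : ℝ => 3 * t ^ ((1 : ℝ) / 3)) (τ ^ (-(2 : ℝ) / 3)) τ := by
    intro τ hτ
    have h := Real.hasDerivAt_rpow_const (x := τ) (p := (1 : ℝ) / 3) (Or.inl hτ.ne')
    have h2 := h.const_mul (3 : ℝ)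
    refine h2.congr_deriv ?_
    have he : (1 : ℝ) / 3 - 1 = -(2 : ℝ) / 3 := by norm_num
    rw [he]; ring
  -- step 1 : the first time-derivative of B
  have hBt : ∀ y τ : ℝ, 0 < τ →
      pdt B (y, τ) = 3 * τ ^ (-(1 : ℝ) / 3)
        * pdt (pdt u) (y, 3 * τ ^ ((1 : ℝ) / 3)) := by
    intro y τ hτ
    set sτ : ℝ := 3 * τ ^ ((1 : ℝ) / 3) with hsτdef
    have hsτ : 0 < sτ := by positivity
    have hev : (fun t => B (y, t)) =ᶠ[𝓝 τ]
        (fun t => 3 * t ^ ((1 : ℝ) / 3) * pdt u (y, 3 * t ^ ((1 : ℝ) / 3))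
          - u (y, 3 * t ^ ((1 : ℝ) / 3))) := by
      filter_upwards [eventually_gt_nhds hτ] with t ht
      exact hB y t ht
    have h1 : HasDerivAt (fun t => pdt u (y, t)) (pdt (pdt u) (y, sτ)) sτ :=
      hasDerivAt_pdt (du1 (y, sτ) hsτ)
    have h0 : HasDerivAt (fun t => u (y, t)) (pdt u (y, sτ)) sτ :=
      hasDerivAt_pdt (du (y, sτ) hsτ)
    have hc1 : HasDerivAt (fun t => pdt u (y, 3 * t ^ ((1 : ℝ) / 3)))
        (pdt (pdt u) (y, sτ) * τ ^ (-(2 : ℝ) / 3)) τ := by have := h1.comp τ (hφ τ hτ); exact this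
    have hc0 : HasDerivAt (fun t => u (y, 3 * t ^ ((1 : ℝ) / 3)))
        (pdt u (y, sτ) * τ ^ (-(2 : ℝ) / 3)) τ := by have := h0.comp τ (hφ τ hτ); exact this
    have hmul := ((hφ τ hτ).fun_mul hc1).fun_sub hc0
    have hder : pdt B (y, τ) = deriv (fun t => B (y, t)) τ := rfl
    rw [hder, hev.deriv_eq, hmul.deriv]
    have hr : τ ^ ((1 : ℝ) / 3) * τ ^ (-(2 : ℝ) / 3) = τ ^ (-(1 : ℝ) / 3) := by
      rw [← Real.rpow_add hτ]; norm_num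
    rw [hsτdef]
    linear_combination (3 * pdt (pdt u) (y, 3 * τ ^ ((1 : ℝ) / 3))) * hr
  -- main computation
  intro x T hT
  set s : ℝ := 3 * T ^ ((1 : ℝ) / 3) with hsdef
  have hs : 0 < s := by positivity
  -- second time-derivative of B
  have hψ : HasDerivAt (fun τ : ℝ => 3 * τ ^ (-(1 : ℝ) / 3)) (-T ^ (-(4 : ℝ) / 3)) T := by
    have h := Real.hasDerivAt_rpow_const (x := T) (p := -(1 : ℝ) / 3) (Or.inl hT.ne')
    have h2 := h.const_mul (3 : ℝ)
    refine h2.congr_deriv ?_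
    have he : -(1 : ℝ) / 3 - 1 = -(4 : ℝ) / 3 := by norm_num
    rw [he]; ring
  have h3 : HasDerivAt (fun t => pdt (pdt u) (x, t)) (pdt (pdt (pdt u)) (x, s)) s :=
    hasDerivAt_pdt (du2 (x, s) hs)
  have hc3 : HasDerivAt (fun τ => pdt (pdt u) (x, 3 * τ ^ ((1 : ℝ) / 3)))
      (pdt (pdt (pdt u)) (x, s) * T ^ (-(2 : ℝ) / 3)) T := by have := h3.comp T (hφ T hT); exact this
  have hmul2 := hψ.fun_mul hc3
  have hevT : (fun τ => pdt B (x, τ)) =ᶠ[𝓝 T]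
      (fun τ => 3 * τ ^ (-(1 : ℝ) / 3) * pdt (pdt u) (x, 3 * τ ^ ((1 : ℝ) / 3))) := by
    filter_upwards [eventually_gt_nhds hT] with τ hτ
    exact hBt x τ hτ
  have hLHS : pdt (pdt B) (x, T)
      = -T ^ (-(4 : ℝ) / 3) * pdt (pdt u) (x, s)
        + 3 * T ^ (-(1 : ℝ) / 3) * (pdt (pdt (pdt u)) (x, s) * T ^ (-(2 : ℝ) / 3)) := by
    have hder : pdt (pdt B) (x, T) = deriv (fun τ => pdt B (x, τ)) T := rfl
    rw [hder, hevT.deriv_eq, hmul2.deriv]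
  -- x-derivatives of B
  have hBx : ∀ y : ℝ, pdx B (y, T) = s * pdx (pdt u) (y, s) - pdx u (y, s) := by
    intro y
    have hfe : (fun y' => B (y', T))
        = fun y' => s * pdt u (y', s) - u (y', s) := by
      funext y'
      rw [hB y' T hT]
    have h1 : HasDerivAt (fun y' => pdt u (y', s)) (pdx (pdt u) (y, s)) y :=
      hasDerivAt_pdx (du1 (y, s) hs)
    have h0 : HasDerivAt (fun y' => u (y', s)) (pdx u (y, s)) y :=
      hasDerivAt_pdx (du (y, s) hs)
    have hmul := (h1.const_mul s).fun_sub h0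
    have hder : pdx B (y, T) = deriv (fun y' => B (y', T)) y := rfl
    rw [hder, hfe, hmul.deriv]
  have hRHS : pdx (pdx B) (x, T)
      = s * pdx (pdx (pdt u)) (x, s) - pdx (pdx u) (x, s) := by
    have hfe : (fun y => pdx B (y, T))
        = fun y => s * pdx (pdt u) (y, s) - pdx u (y, s) := funext hBx
    have h1 : HasDerivAt (fun y => pdx (pdt u) (y, s)) (pdx (pdx (pdt u)) (x, s)) x :=
      hasDerivAt_pdx (dxt (x, s) hs)
    have h0 : HasDerivAt (fun y => pdx u (y, s)) (pdx (pdx u) (x, s)) x :=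
      hasDerivAt_pdx (dx1 (x, s) hs)
    have hmul := (h1.const_mul s).fun_sub h0
    have hder : pdx (pdx B) (x, T) = deriv (fun y => pdx B (y, T)) x := rfl
    rw [hder, hfe, hmul.deriv]
  -- wave equation identities
  have hwave1 : pdt (pdt u) (x, s) = c x ^ 2 * pdx (pdx u) (x, s) := hwave x s hs
  have hu3 : pdt (pdt (pdt u)) (x, s) = c x ^ 2 * pdt (pdx (pdx u)) (x, s) := by
    have hev : (fun t => pdt (pdt u) (x, t)) =ᶠ[𝓝 s]
        (fun t => c x ^ 2 * pdx (pdx u) (x, t)) := by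
      filter_upwards [eventually_gt_nhds hs] with t ht
      exact hwave x t ht
    have h1 : HasDerivAt (fun t => pdx (pdx u) (x, t)) (pdt (pdx (pdx u)) (x, s)) s :=
      hasDerivAt_pdt (dxx (x, s) hs)
    have h2 := h1.const_mul (c x ^ 2)
    have hder : pdt (pdt (pdt u)) (x, s) = deriv (fun t => pdt (pdt u) (x, t)) s := rfl
    rw [hder, hev.deriv_eq, h2.deriv]
  have hswap1 : pdt (pdx (pdx u)) (x, s) = pdx (pdt (pdx u)) (x, s) :=
    clairaut (hx1 (x, s) hs)
  have hswap2 : pdx (pdt (pdx u)) (x, s) = pdx (pdx (pdt u)) (x, s) := by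
    have hfe : (fun y => pdt (pdx u) (y, s)) = fun y => pdx (pdt u) (y, s) :=
      funext fun y => clairaut (cd2 (y, s) hs)
    have hder1 : pdx (pdt (pdx u)) (x, s) = deriv (fun y => pdt (pdx u) (y, s)) x := rfl
    have hder2 : pdx (pdx (pdt u)) (x, s) = deriv (fun y => pdx (pdt u) (y, s)) x := rfl
    rw [hder1, hder2, hfe]
  -- putting everything together
  rw [hLHS, hRHS, hwave1, hu3, hswap1, hswap2, hsdef]
  have hr2 : T ^ (-(1 : ℝ) / 3) * T ^ (-(2 : ℝ) / 3)
      = T ^ (-(4 : ℝ) / 3) * T ^ ((1 : ℝ) / 3) := by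
    rw [← Real.rpow_add hT, ← Real.rpow_add hT]; norm_num
  linear_combination (3 * c x ^ 2 * pdx (pdx (pdt u)) (x, 3 * T ^ ((1 : ℝ) / 3))) * hr2
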